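/- Let 𝒱 and 𝒲 be reduced cyclic words. Then: (a) the set 𝕃ℙ₂(𝒱,𝒲) has at most l(𝒱)·l(𝒲) elements; (b) the set 𝕃ℙ₁(𝒲) has at most l(𝒲)·(l(𝒲)−1) elements. -/

import Mathlib

open List

namespace CyclicWords

/-- A letter of the alphabet `𝔸ₙ = {a₁,…,aₙ, ā₁,…,āₙ}`: a generator index together
with a Boolean recording whether the letter is barred. -/
abbrev Letter (n : ℕ) := Bool × Fin n

/-- The involution `x ↦ x̄` on letters. -/
def Letter.bar {n : ℕ} (x : Letter n) : Letter n := (!x.1, x.2)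

/-- A linear word: a finite sequence of letters. -/
abbrev Word (n : ℕ) := List (Letter n)

/-- `W̄ = x̄ₘ ⋯ x̄₁ x̄₀` for `W = x₀x₁⋯xₘ`. -/
def Word.bar {n : ℕ} (W : Word n) : Word n := (W.map Letter.bar).reverse

/-- `Wᵏ`, the concatenation of `k` copies of `W`. -/
def wpow {n : ℕ} (W : Word n) (k : ℕ) : Word n := (List.replicate k W).flatten

/-- A linear word is freely reduced when consecutive letters are never inverse
to each other. -/
def FreelyReduced {n : ℕ} (W : Word n) : Prop :=
  W.Chain' (fun a b => b ≠ Letter.bar a)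

/-- A cyclic word: an equivalence class of linear words under cyclic rotation. -/
abbrev CWord (n : ℕ) := Cycle (Letter n)

/-- `c(W)`, the cyclic word represented by the linear word `W`. -/
def cyc {n : ℕ} (W : Word n) : CWord n := ↑W

/-- The length of a cyclic word. -/
def clen {n : ℕ} (𝒲 : CWord n) : ℕ := 𝒲.length

/-- A cyclic word is reduced if it is non-empty and all of its linear
representatives are freely reduced. -/
def CReduced {n : ℕ} (𝒲 : CWord n) : Prop :=
  𝒲 ≠ Cycle.nil ∧ ∀ W : Word n, cyc W = 𝒲 → FreelyReduced W

/-- `P` is a (linear) subword of the cyclic word `𝒲`, i.e. a linear subword of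
one of its linear representatives. -/
def Subword {n : ℕ} (P : Word n) (𝒲 : CWord n) : Prop :=
  ∃ W : Word n, cyc W = 𝒲 ∧ P <:+: W

/-- `P` is a subword of the power `𝒲ʲ`. -/
def SubwordPow {n : ℕ} (P : Word n) (𝒲 : CWord n) (j : ℕ) : Prop :=
  ∃ W : Word n, cyc W = 𝒲 ∧ P <:+: wpow W j

/-- A surface symbol: a reduced cyclic word in which every letter of `𝔸ₙ`
appears exactly once. -/
def SurfaceSymbol {n : ℕ} (𝒪 : CWord n) : Prop :=
  CReduced 𝒪 ∧ ∃ O : Word n, cyc O = 𝒪 ∧ O.Nodup ∧ ∀ x : Letter n, x ∈ O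

/-- `𝒲` is reduced and its (distinct) letters embed into `𝒪` preserving the
cyclic order. -/
def OrientPos {n : ℕ} (𝒪 𝒲 : CWord n) : Prop :=
  CReduced 𝒲 ∧ ∃ W O : Word n, cyc W = 𝒲 ∧ cyc O = 𝒪 ∧ W.Sublist O

/-- `𝒲` is reduced and its (distinct) letters embed into `𝒪` reversing the
cyclic order. -/
def OrientNeg {n : ℕ} (𝒪 𝒲 : CWord n) : Prop :=
  CReduced 𝒲 ∧ ∃ W O : Word n, cyc W = 𝒲 ∧ cyc O = 𝒪 ∧ W.Sublist O.reverse

open Classical in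
/-- The number `o(𝒲) ∈ {-1,0,1}` associated to a cyclic word `𝒲`. -/
noncomputable def o {n : ℕ} (𝒪 𝒲 : CWord n) : ℤ :=
  if OrientPos 𝒪 𝒲 then 1 else if OrientNeg 𝒪 𝒲 then -1 else 0

/-- Condition (1) of the definition of `𝒪`-linked pairs. -/
def LinkedType1 {n : ℕ} (𝒪 : CWord n) (P Q : Word n) : Prop :=
  ∃ p₁ p₂ q₁ q₂ : Letter n, P = [p₁, p₂] ∧ Q = [q₁, q₂] ∧
    o 𝒪 (cyc [Letter.bar p₁, Letter.bar q₁, p₂, q₂]) ≠ 0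

/-- Condition (2) of the definition of `𝒪`-linked pairs (`x₁`, `x₂` denote the
first and last letters of `Y`). -/
def LinkedType2 {n : ℕ} (𝒪 : CWord n) (P Q : Word n) : Prop :=
  ∃ (p₁ p₂ q₁ q₂ : Letter n) (Y : Word n), Y ≠ [] ∧
    P = p₁ :: Y ++ [p₂] ∧ Q = q₁ :: Y ++ [q₂] ∧ p₁ ≠ q₁ ∧ p₂ ≠ q₂ ∧
    ∀ x₁ x₂ : Letter n, Y.head? = some x₁ → Y.getLast? = some x₂ →
      o 𝒪 (cyc [Letter.bar p₁, Letter.bar q₁, x₁]) = o 𝒪 (cyc [p₂, q₂, Letter.bar x₂])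

/-- Condition (3) of the definition of `𝒪`-linked pairs. -/
def LinkedType3 {n : ℕ} (𝒪 : CWord n) (P Q : Word n) : Prop :=
  ∃ (p₁ p₂ q₁ q₂ : Letter n) (Y : Word n), Y ≠ [] ∧
    P = p₁ :: Y ++ [p₂] ∧ Q = q₁ :: Word.bar Y ++ [q₂] ∧
    p₁ ≠ Letter.bar q₂ ∧ p₂ ≠ Letter.bar q₁ ∧
    ∀ x₁ x₂ : Letter n, Y.head? = some x₁ → Y.getLast? = some x₂ →
      o 𝒪 (cyc [q₂, Letter.bar p₁, x₁]) = o 𝒪 (cyc [Letter.bar q₁, p₂, Letter.bar x₂])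

/-- The ordered pair `(P,Q)` is `𝒪`-linked. -/
def IsLinked {n : ℕ} (𝒪 : CWord n) (P Q : Word n) : Prop :=
  FreelyReduced P ∧ FreelyReduced Q ∧ 2 ≤ P.length ∧ 2 ≤ Q.length ∧
    (LinkedType1 𝒪 P Q ∨ LinkedType2 𝒪 P Q ∨ LinkedType3 𝒪 P Q)

open Classical in
/-- The sign of a linked pair `(P,Q)`. -/
noncomputable def sign {n : ℕ} (𝒪 : CWord n) (P Q : Word n) : ℤ :=
  match P, Q with
  | p₁ :: ps, q₁ :: qs =>
    match ps.getLast?, qs.getLast?, ps.head? with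
    | some p₂, some q₂, some x₁ =>
      if LinkedType1 𝒪 (p₁ :: ps) (q₁ :: qs) then
        o 𝒪 (cyc [Letter.bar p₁, Letter.bar q₁, p₂, q₂])
      else if LinkedType2 𝒪 (p₁ :: ps) (q₁ :: qs) then
        o 𝒪 (cyc [Letter.bar p₁, Letter.bar q₁, x₁])
      else if LinkedType3 𝒪 (p₁ :: ps) (q₁ :: qs) then
        o 𝒪 (cyc [q₂, Letter.bar p₁, x₁])
      else 0
    | _, _, _ => 0
  | _, _ => 0

/-- `𝕃ℙ₁(𝒲)`: `(P,Q)` is an `𝒪`-linked pair of subwords of `𝒲`. -/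
def LP1 {n : ℕ} (𝒪 𝒲 : CWord n) (P Q : Word n) : Prop :=
  IsLinked 𝒪 P Q ∧ Subword P 𝒲 ∧ Subword Q 𝒲

/-- `𝕃ℙ₂(𝒱,𝒲)`: `(P,Q)` is an `𝒪`-linked pair with `P` a subword of `𝒱ʲ`,
`Q` a subword of `𝒲ᵏ` in the appropriate length windows. -/
def LP2 {n : ℕ} (𝒪 𝒱 𝒲 : CWord n) (P Q : Word n) : Prop :=
  IsLinked 𝒪 P Q ∧
    ∃ j k : ℕ, 0 < j ∧ 0 < k ∧ SubwordPow P 𝒱 j ∧ SubwordPow Q 𝒲 k ∧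
      (j - 1) * clen 𝒱 < P.length ∧ P.length ≤ j * clen 𝒱 ∧
      (k - 1) * clen 𝒲 < Q.length ∧ Q.length ≤ k * clen 𝒲

/-- The cut data for `δ` when `(P,Q)` has type (1) or (2): two cuts of `𝒲`
producing `W₁` (starting at the occurrence of `p₂`, the last letter of `P`) and
`W₂` (starting at the occurrence of `q₂`, the last letter of `Q`). -/
def DeltaPair12 {n : ℕ} (𝒪 𝒲 : CWord n) (P Q W₁ W₂ : Word n) : Prop :=
  (LinkedType1 𝒪 P Q ∨ LinkedType2 𝒪 P Q) ∧
  𝒲 = cyc (W₁ ++ W₂) ∧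
  (∃ (P' : Word n) (p₂ : Letter n), P = P' ++ [p₂] ∧ W₁.head? = some p₂ ∧
      P' <:+ W₁ ++ W₂) ∧
  (∃ (Q' : Word n) (q₂ : Letter n), Q = Q' ++ [q₂] ∧ W₂.head? = some q₂ ∧
      Q' <:+ W₂ ++ W₁)

/-- The cut data for `δ` when `(P,Q)` has type (3): `W₁` runs from `p₂` to
`q₁`, and `W₂` from `q₂` to `p₁`. -/
def DeltaPair3 {n : ℕ} (𝒪 𝒲 : CWord n) (P Q W₁ W₂ : Word n) : Prop :=
  LinkedType3 𝒪 P Q ∧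
  ∃ (p₁ p₂ q₁ q₂ : Letter n) (Y Y' : Word n), Y ≠ [] ∧ Y' ≠ [] ∧
    P = p₁ :: Y ++ [p₂] ∧ Q = q₁ :: Y' ++ [q₂] ∧
    W₁.head? = some p₂ ∧ W₁.getLast? = some q₁ ∧
    W₂.head? = some q₂ ∧ W₂.getLast? = some p₁ ∧
    𝒲 = cyc (W₁ ++ Y' ++ W₂ ++ Y)

/-- The words `W₁`, `W₂` obtained by cutting `𝒲` along the linked pair `(P,Q)`. -/
def DeltaPair {n : ℕ} (𝒪 𝒲 : CWord n) (P Q W₁ W₂ : Word n) : Prop :=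
  DeltaPair12 𝒪 𝒲 P Q W₁ W₂ ∨ DeltaPair3 𝒪 𝒲 P Q W₁ W₂

open Classical in
/-- A choice of the pair of linear words obtained by cutting `𝒲` along `(P,Q)`. -/
noncomputable def deltaW {n : ℕ} (𝒪 𝒲 : CWord n) (P Q : Word n) : Word n × Word n :=
  if h : ∃ W : Word n × Word n, DeltaPair 𝒪 𝒲 P Q W.1 W.2 then h.choose else ([], [])

/-- The cyclic word `δ₁(P,Q)`. -/
noncomputable def delta1 {n : ℕ} (𝒪 𝒲 : CWord n) (P Q : Word n) : CWord n :=
  cyc (deltaW 𝒪 𝒲 P Q).1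

/-- The cyclic word `δ₂(P,Q)`. -/
noncomputable def delta2 {n : ℕ} (𝒪 𝒲 : CWord n) (P Q : Word n) : CWord n :=
  cyc (deltaW 𝒪 𝒲 P Q).2

/-- `W₁` is the linear representative of `↑W₁` obtained by cutting immediately
before (the occurrence of) the last letter of `P`: `P` occurs (in a power)
ending exactly at the cut. -/
def CutEnds {n : ℕ} (W₁ P : Word n) : Prop :=
  ∃ (P' : Word n) (p₂ : Letter n) (j : ℕ),
    P = P' ++ [p₂] ∧ W₁.head? = some p₂ ∧ P' <:+ wpow W₁ j

/-- The data for `γ(P,Q)` when `(P,Q) ∈ 𝕃ℙ₂(𝒱,𝒲)` has type (1) or (2):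
`γ(P,Q) = c(V₁W₁)` where `V₁`, `W₁` are the representatives of `𝒱`, `𝒲` obtained
by cutting immediately before `p₂`, resp. `q₂`. -/
def GammaPair12 {n : ℕ} (𝒪 𝒱 𝒲 : CWord n) (P Q : Word n) (G : CWord n) : Prop :=
  (LinkedType1 𝒪 P Q ∨ LinkedType2 𝒪 P Q) ∧
  ∃ V₁ W₁ : Word n, cyc V₁ = 𝒱 ∧ cyc W₁ = 𝒲 ∧ CutEnds V₁ P ∧ CutEnds W₁ Q ∧
    G = cyc (V₁ ++ W₁)

/-- The data for `γ(P,Q)` when `(P,Q) ∈ 𝕃ℙ₂(𝒱,𝒲)` has type (3):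
`V₁` is the subword of `𝒱` starting right after the end of `Y` and ending right
before the first letter of `Y` (whose footprint in `𝒱` is the arc `U`), and
similarly `W₁` for `Ȳ` in `𝒲`; then `γ(P,Q) = c(V₁W₁)`. -/
def GammaPair3 {n : ℕ} (𝒪 𝒱 𝒲 : CWord n) (P Q : Word n) (G : CWord n) : Prop :=
  LinkedType3 𝒪 P Q ∧
  ∃ (p₁ p₂ q₁ q₂ : Letter n) (Y V₁ W₁ U U' : Word n) (j k : ℕ),
    P = p₁ :: Y ++ [p₂] ∧ Q = q₁ :: Word.bar Y ++ [q₂] ∧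
    V₁.head? = some p₂ ∧ V₁.getLast? = some p₁ ∧
    W₁.head? = some q₂ ∧ W₁.getLast? = some q₁ ∧
    𝒱 = cyc (U ++ V₁) ∧ Y <+: wpow (U ++ V₁) j ∧ Y.length % clen 𝒱 = U.length ∧
    𝒲 = cyc (U' ++ W₁) ∧ Word.bar Y <+: wpow (U' ++ W₁) k ∧
      (Word.bar Y).length % clen 𝒲 = U'.length ∧
    G = cyc (V₁ ++ W₁)

/-- `G` is the cyclic word `γ(P,Q)` associated to `(P,Q) ∈ 𝕃ℙ₂(𝒱,𝒲)`. -/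
def GammaPair {n : ℕ} (𝒪 𝒱 𝒲 : CWord n) (P Q : Word n) (G : CWord n) : Prop :=
  GammaPair12 𝒪 𝒱 𝒲 P Q G ∨ GammaPair3 𝒪 𝒱 𝒲 P Q G

open Classical in
/-- A choice of the cyclic word `γ(P,Q)` for `(P,Q) ∈ 𝕃ℙ₂(𝒱,𝒲)`. -/
noncomputable def gamma {n : ℕ} (𝒪 𝒱 𝒲 : CWord n) (P Q : Word n) : CWord n :=
  if h : ∃ G : CWord n, GammaPair 𝒪 𝒱 𝒲 P Q G then h.choose else Cycle.nil

/-- The set of non-empty reduced cyclic words, the basis of `𝕍`. -/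
def RedCyc (n : ℕ) := {𝒲 : CWord n // CReduced 𝒲}

instance {n : ℕ} [NeZero n] : Inhabited (RedCyc n) :=
  ⟨⟨cyc [default], by
    constructor
    · intro h
      have h' : ([(default : Letter n)] : Word n) = [] := (Cycle.coe_eq_nil _).mp h
      simp at h'
    · intro W hW
      have h1 : W ~r [(default : Letter n)] := Cycle.coe_eq_coe.mp hW
      have h2 : W = [(default : Letter n)] := List.perm_singleton.mp h1.perm
      rw [h2]
      exact List.isChain_singleton _⟩⟩

open Classical in
/-- View a cyclic word as a basis element of `𝕍` (junk value if not reduced). -/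
noncomputable def toRed {n : ℕ} [NeZero n] (c : CWord n) : RedCyc n :=
  if h : CReduced c then ⟨c, h⟩ else default


section Aux
variable {n : ℕ}

lemma Letter.bar_bar (x : Letter n) : Letter.bar (Letter.bar x) = x := by
  simp [Letter.bar]

lemma Letter.bar_ne_self (x : Letter n) : Letter.bar x ≠ x := by
  simp [Letter.bar, Prod.ext_iff]

lemma Letter.bar_inj {x y : Letter n} (h : Letter.bar x = Letter.bar y) : x = y := by
  have := congrArg Letter.bar h; simpa [Letter.bar_bar] using this

lemma Word.bar_append (X Y : Word n) :
    Word.bar (X ++ Y) = Word.bar Y ++ Word.bar X := by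
  simp [Word.bar]

lemma Word.bar_cons (x : Letter n) (X : Word n) :
    Word.bar (x :: X) = Word.bar X ++ [Letter.bar x] := by
  simp [Word.bar]

lemma Word.bar_prefix_of_suffix {X Y : Word n} (h : X <:+ Y) :
    Word.bar X <+: Word.bar Y := by
  obtain ⟨Z, rfl⟩ := h
  rw [Word.bar_append]; exact ⟨Word.bar Z, rfl⟩

-- wpow lemmas
lemma wpow_zero (W : Word n) : wpow W 0 = [] := rfl

lemma wpow_succ (W : Word n) (k : ℕ) : wpow W (k + 1) = W ++ wpow W k := by
  simp [wpow, List.replicate_succ]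

lemma wpow_one (W : Word n) : wpow W 1 = W := by
  simp [wpow]

lemma wpow_add (W : Word n) (j k : ℕ) : wpow W (j + k) = wpow W j ++ wpow W k := by
  induction j with
  | zero => simp [wpow_zero]
  | succ j ih => rw [Nat.succ_add, wpow_succ, wpow_succ, ih, List.append_assoc]

lemma wpow_succ' (W : Word n) (k : ℕ) : wpow W (k + 1) = wpow W k ++ W := by
  rw [wpow_add, wpow_one]

lemma length_wpow (W : Word n) (k : ℕ) : (wpow W k).length = k * W.length := by
  induction k with
  | zero => simp [wpow_zero]
  | succ k ih => rw [wpow_succ, List.length_append, ih]; ring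

lemma wpow_suffix_wpow (W : Word n) {j k : ℕ} (h : j ≤ k) :
    wpow W j <:+ wpow W k := by
  obtain ⟨d, rfl⟩ := Nat.exists_eq_add_of_le h
  rw [Nat.add_comm, wpow_add]; exact ⟨wpow W d, rfl⟩

lemma wpow_prefix_wpow (W : Word n) {j k : ℕ} (h : j ≤ k) :
    wpow W j <+: wpow W k := by
  obtain ⟨d, rfl⟩ := Nat.exists_eq_add_of_le h
  rw [wpow_add]; exact ⟨wpow W d, rfl⟩

lemma head?_wpow {W : Word n} (hW : W ≠ []) {k : ℕ} (hk : 1 ≤ k) :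
    (wpow W k).head? = W.head? := by
  obtain ⟨d, rfl⟩ := Nat.exists_eq_add_of_le hk
  rw [Nat.add_comm, wpow_succ, List.head?_append]
  cases W with
  | nil => exact absurd rfl hW
  | cons a l => simp

lemma getLast?_wpow {W : Word n} (hW : W ≠ []) {k : ℕ} (hk : 1 ≤ k) :
    (wpow W k).getLast? = W.getLast? := by
  obtain ⟨d, rfl⟩ := Nat.exists_eq_add_of_le hk
  rw [Nat.add_comm, wpow_succ', List.getLast?_append]
  cases h : W.getLast? with
  | none => exact absurd (List.getLast?_eq_none_iff.mp h) hW
  | some x => simp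

-- comparability lemmas
lemma suffix_of_suffix_length_le' {X Y L : Word n} (hX : X <:+ L) (hY : Y <:+ L)
    (h : X.length ≤ Y.length) : X <:+ Y := by
  rw [← List.reverse_prefix] at hX hY ⊢
  exact List.prefix_of_prefix_length_le hX hY (by simpa)

lemma suffix_eq_of_length {X Y L : Word n} (hX : X <:+ L) (hY : Y <:+ L)
    (h : X.length = Y.length) : X = Y := by
  have h1 := suffix_of_suffix_length_le' hX hY h.le
  obtain ⟨Z, rfl⟩ := h1
  have hZ : Z = [] := by
    have h2 : X.length = Z.length + X.length := by simpa using h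
    have : Z.length = 0 := by omega
    exact List.length_eq_zero_iff.mp this
  simp [hZ]

lemma prefix_eq_of_length {X Y L : Word n} (hX : X <+: L) (hY : Y <+: L)
    (h : X.length = Y.length) : X = Y :=
  List.IsPrefix.eq_of_length (List.prefix_of_prefix_length_le hX hY h.le) h

lemma suffix_wpow_trans {R X Y : Word n} {j k : ℕ} (hX : X <:+ wpow R j)
    (hY : Y <:+ wpow R k) (h : X.length ≤ Y.length) : X <:+ Y :=
  suffix_of_suffix_length_le'
    (hX.trans (wpow_suffix_wpow R (Nat.le_add_right j k)))
    (hY.trans (wpow_suffix_wpow R (Nat.le_add_left k j))) h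

lemma prefix_wpow_trans {R X Y : Word n} {j k : ℕ} (hX : X <+: wpow R j)
    (hY : Y <+: wpow R k) (h : X.length ≤ Y.length) : X <+: Y :=
  List.prefix_of_prefix_length_le
    (hX.trans (wpow_prefix_wpow R (Nat.le_add_right j k)))
    (hY.trans (wpow_prefix_wpow R (Nat.le_add_left k j))) h

lemma suffix_wpow_eq {R X Y : Word n} {j k : ℕ} (hX : X <:+ wpow R j)
    (hY : Y <:+ wpow R k) (h : X.length = Y.length) : X = Y :=
  suffix_eq_of_length (hX.trans (wpow_suffix_wpow R (Nat.le_add_right j k)))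
    (hY.trans (wpow_suffix_wpow R (Nat.le_add_left k j))) h

lemma prefix_wpow_eq {R X Y : Word n} {j k : ℕ} (hX : X <+: wpow R j)
    (hY : Y <+: wpow R k) (h : X.length = Y.length) : X = Y :=
  prefix_eq_of_length (hX.trans (wpow_prefix_wpow R (Nat.le_add_right j k)))
    (hY.trans (wpow_prefix_wpow R (Nat.le_add_left k j))) h

lemma suffix_cons_drop {x : Letter n} {X Z : Word n} (h : X <:+ x :: Z)
    (hl : X.length ≤ Z.length) : X <:+ Z :=
  suffix_of_suffix_length_le' h (List.suffix_cons x Z) hl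

lemma prefix_snoc_drop {y : Letter n} {X Z : Word n} (h : X <+: Z ++ [y])
    (hl : X.length ≤ Z.length) : X <+: Z :=
  List.prefix_of_prefix_length_le h ⟨[y], rfl⟩ hl

end Aux
section Core
variable {n : ℕ}

lemma suffix_append_right {X Y : Word n} (Z : Word n) (h : X <:+ Y) : X ++ Z <:+ Y ++ Z := by
  obtain ⟨U, rfl⟩ := h; exact ⟨U, (List.append_assoc U X Z).symm⟩

lemma prefix_append_left {X Y : Word n} (Z : Word n) (h : X <+: Y) : Z ++ X <+: Z ++ Y := by
  obtain ⟨U, rfl⟩ := h; exact ⟨U, List.append_assoc Z X U⟩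

lemma head?_of_prefix {X L : Word n} (h : X <+: L) (hX : X ≠ []) :
    L.head? = X.head? := by
  obtain ⟨U, rfl⟩ := h
  cases X with
  | nil => exact absurd rfl hX
  | cons a t => simp

lemma getLast?_of_suffix {X L : Word n} (h : X <:+ L) (hX : X ≠ []) :
    L.getLast? = X.getLast? := by
  obtain ⟨U, rfl⟩ := h
  rw [List.getLast?_append]
  cases hx : X.getLast? with
  | none => exact absurd (List.getLast?_eq_none_iff.mp hx) hX
  | some x => simp

lemma wpow_swap (T D : Word n) (q : ℕ) :
    wpow (T ++ D) q ++ T = T ++ wpow (D ++ T) q := by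
  induction q with
  | zero => simp [wpow_zero]
  | succ q ih =>
      rw [wpow_succ, wpow_succ, List.append_assoc, ih]
      simp only [← List.append_assoc]

lemma getLast?_mix {T R : Word n} (hT : T <:+ R) (hR : R ≠ []) (q : ℕ)
    (hne : T ++ wpow R q ≠ []) : (T ++ wpow R q).getLast? = R.getLast? := by
  cases q with
  | zero =>
      rw [wpow_zero, List.append_nil] at hne ⊢
      exact (getLast?_of_suffix hT hne).symm
  | succ q =>
      rw [List.getLast?_append, getLast?_wpow hR (Nat.succ_le_succ (Nat.zero_le q))]
      cases hx : R.getLast? with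
      | none => exact absurd (List.getLast?_eq_none_iff.mp hx) hR
      | some x => simp

lemma head?_mix {D R : Word n} (hD : D <+: R) (hR : R ≠ []) (s : ℕ)
    (hne : wpow R s ++ D ≠ []) : (wpow R s ++ D).head? = R.head? := by
  cases s with
  | zero =>
      rw [wpow_zero, List.nil_append] at hne ⊢
      exact (head?_of_prefix hD hne).symm
  | succ s =>
      rw [List.head?_append, head?_wpow hR (Nat.succ_le_succ (Nat.zero_le s))]
      cases hx : R.head? with
      | none => exact absurd (List.head?_eq_none_iff.mp hx) hR
      | some x => simp

/-- Master splitting lemma: a factorization of a power of `V` induces a rotation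
of `V` "cutting" at the factorization point. -/
lemma split_wpow {V : Word n} (hV : V ≠ []) {j : ℕ} {A Z : Word n}
    (h : wpow V j = A ++ Z) (hZ : Z ≠ []) :
    ∃ (R T D : Word n) (q s : ℕ),
      cyc R = cyc V ∧ R ≠ [] ∧ R = D ++ T ∧
      T <:+ R ∧ D <+: R ∧
      A = T ++ wpow R q ∧ Z = wpow R s ++ D := by
  have ha : 0 < V.length := List.length_pos_iff.mpr hV
  set a := V.length with hadef
  set m := A.length % a with hm
  set q := A.length / a with hq
  set T := V.take m with hTdef
  set D := V.drop m with hDdef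
  set R := D ++ T with hRdef
  have hmlt : m < a := Nat.mod_lt _ ha
  have hrot : V.rotate m = R := List.rotate_eq_drop_append_take hmlt.le
  have hV2 : V = T ++ D := (List.take_append_drop m V).symm
  have hRlen : R.length = a := by
    rw [hRdef, List.length_append, hTdef, hDdef]; simp; omega
  have hRne : R ≠ [] := by
    intro hnil
    rw [hnil] at hRlen; simp at hRlen; omega
  have hcycR : cyc R = cyc V := by
    rw [← hrot]
    show (↑(V.rotate m) : Cycle (Letter n)) = ↑V
    rw [Cycle.coe_eq_coe]
    exact List.IsRotated.symm ⟨m, rfl⟩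
  have hlen : A.length + Z.length = j * a := by
    have := congrArg List.length h
    simpa [length_wpow] using this.symm
  have hqj : q < j := by
    have hZpos : 0 < Z.length := List.length_pos_iff.mpr hZ
    rw [hq]
    exact (Nat.div_lt_iff_lt_mul ha).mpr (by omega)
  obtain ⟨s, hs⟩ : ∃ s, j = q + (s + 1) := ⟨j - (q+1), by omega⟩
  have hmid : wpow (T ++ D) ((q + s) + 1) = (T ++ wpow (D ++ T) (q + s)) ++ D := by
    calc wpow (T ++ D) ((q+s)+1) = wpow (T ++ D) (q+s) ++ (T ++ D) := wpow_succ' _ _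
      _ = (wpow (T ++ D) (q+s) ++ T) ++ D := by rw [List.append_assoc]
      _ = (T ++ wpow (D ++ T) (q+s)) ++ D := by rw [wpow_swap]
  have key : wpow V j = (T ++ wpow R q) ++ (wpow R s ++ D) := by
    have hj : j = (q + s) + 1 := by omega
    rw [hj]
    conv_lhs => rw [hV2]
    rw [hmid, ← hRdef, wpow_add, List.append_assoc, List.append_assoc]
    exact (List.append_assoc T (wpow R q) (wpow R s ++ D)).symm
  have hlenA : A.length = (T ++ wpow R q).length := by
    have h1 : T.length = m := by
      rw [hTdef, List.length_take]
      exact Nat.min_eq_left hmlt.le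
    rw [List.length_append, length_wpow, hRlen, h1, hm, hq]
    exact (Nat.mod_add_div' A.length a).symm
  obtain ⟨hA, hZ'⟩ := List.append_inj (h.symm.trans key) hlenA
  exact ⟨R, T, D, q, s, hcycR, hRne, rfl, ⟨D, rfl⟩, ⟨T, rfl⟩, hA, hZ'⟩

end Core
section AnchorDef
variable {n : ℕ}

lemma rep_ne_nil {𝒲 : CWord n} (h : CReduced 𝒲) {R : Word n} (hR : cyc R = 𝒲) :
    R ≠ [] := by
  intro hnil
  apply h.1
  rw [← hR, hnil]
  rfl

lemma head?_ne_bar_getLast? {R : Word n} (hred : CReduced (cyc R))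
    {h l : Letter n} (hh : R.head? = some h) (hl : R.getLast? = some l) :
    h ≠ Letter.bar l := by
  have hne : R ≠ [] := rep_ne_nil hred rfl
  by_cases hb : R.length = 1
  · obtain ⟨x, rfl⟩ := List.length_eq_one_iff.mp hb
    have h1 : x = h := by simpa using hh
    have h2 : x = l := by simpa using hl
    have h3 : h = l := h1 ▸ h2
    rw [h3]
    exact fun e => Letter.bar_ne_self l e.symm
  · have hpos : 0 < R.length := List.length_pos_iff.mpr hne
    have hb2 : 2 ≤ R.length := by omega
    set R' := R.rotate (R.length - 1) with hR'def
    have hrot : cyc R' = cyc R := by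
      show (↑(R.rotate (R.length - 1)) : Cycle (Letter n)) = ↑R
      rw [Cycle.coe_eq_coe]
      exact List.IsRotated.symm ⟨R.length - 1, rfl⟩
    have hred' : FreelyReduced R' := hred.2 R' hrot
    have hsplit : R' = R.drop (R.length - 1) ++ R.take (R.length - 1) :=
      List.rotate_eq_drop_append_take (by omega)
    have hdlen : (R.drop (R.length - 1)).length = 1 := by
      rw [List.length_drop]; omega
    obtain ⟨y, hy⟩ := List.length_eq_one_iff.mp hdlen
    have hyl : y = l := by
      have hsuf : R.drop (R.length - 1) <:+ R := List.drop_suffix _ _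
      have := getLast?_of_suffix hsuf (by rw [hy]; simp)
      rw [hl, hy] at this
      simpa using this.symm
    have htlen : 1 ≤ (R.take (R.length - 1)).length := by
      rw [List.length_take]; omega
    obtain ⟨h', t, ht⟩ : ∃ h' t, R.take (R.length - 1) = h' :: t := by
      cases hc : R.take (R.length - 1) with
      | nil => rw [hc] at htlen; simp at htlen
      | cons a s => exact ⟨a, s, rfl⟩
    have hh' : h' = h := by
      have hpre : R.take (R.length - 1) <+: R := List.take_prefix _ _
      have := head?_of_prefix hpre (by rw [ht]; simp)
      rw [hh, ht] at this
      simpa using this.symm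
    rw [hsplit, hy, hyl, ht, hh'] at hred'
    have : h ≠ Letter.bar l := by
      have := List.isChain_cons_cons.mp hred'
      exact this.1
    exact this

lemma nodup_of_o_ne_zero {𝒪 : CWord n} (h𝒪 : SurfaceSymbol 𝒪) {L : Word n}
    (h : o 𝒪 (cyc L) ≠ 0) : L.Nodup := by
  obtain ⟨hOred, O₀, hO₀, hnd, hall⟩ := h𝒪
  have hor : OrientPos 𝒪 (cyc L) ∨ OrientNeg 𝒪 (cyc L) := by
    unfold o at h
    split_ifs at h with h1 h2
    · exact Or.inl h1
    · exact Or.inr h2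
    · exact absurd rfl h
  have key : ∀ X Ol : Word n, cyc X = cyc L → cyc Ol = 𝒪 → X.Sublist Ol → L.Nodup := by
    intro X Ol hX hOl hsub
    have hperm : Ol.Perm O₀ := (Cycle.coe_eq_coe.mp (hOl.trans hO₀.symm)).perm
    have hOlnd : Ol.Nodup := hperm.nodup_iff.mpr hnd
    have hXnd : X.Nodup := List.Nodup.sublist hsub hOlnd
    have hXL : X.Perm L := (Cycle.coe_eq_coe.mp hX).perm
    exact hXL.nodup_iff.mp hXnd
  rcases hor with ⟨_, X, Ol, hX, hOl, hsub⟩ | ⟨_, X, Ol, hX, hOl, hsub⟩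
  · exact key X Ol hX hOl hsub
  · have hsub' : X.Sublist Ol.reverse := hsub
    have : cyc Ol.reverse = cyc Ol.reverse := rfl
    -- use reversed list as "nodup container" directly
    have hperm : Ol.Perm O₀ := (Cycle.coe_eq_coe.mp (hOl.trans hO₀.symm)).perm
    have hOlnd : Ol.Nodup := hperm.nodup_iff.mpr hnd
    have hXnd : X.Nodup := List.Nodup.sublist hsub' (by simpa using hOlnd)
    have hXL : X.Perm L := (Cycle.coe_eq_coe.mp hX).perm
    exact hXL.nodup_iff.mp hXnd

/-- The anchoring data of a linked pair at a pair of cuts `(RV, RW)`. -/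
def Anch (𝒪 : CWord n) (RV RW P Q : Word n) : Prop :=
  (∃ (P' : Word n) (p₂ : Letter n) (j : ℕ),
      P = P' ++ [p₂] ∧ RV.head? = some p₂ ∧ P' <:+ wpow RV j) ∧
  (((LinkedType1 𝒪 P Q ∨ LinkedType2 𝒪 P Q) ∧
      ∃ (Q' : Word n) (q₂ : Letter n) (k : ℕ),
        Q = Q' ++ [q₂] ∧ RW.head? = some q₂ ∧ Q' <:+ wpow RW k) ∨
   (LinkedType3 𝒪 P Q ∧
      ∃ (q₁ : Letter n) (T : Word n) (k : ℕ),
        Q = q₁ :: T ∧ RW.getLast? = some q₁ ∧ T <+: wpow RW k))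

lemma exists_end_cut {V : Word n} (hV : V ≠ []) {j : ℕ} {X : Word n} {x : Letter n}
    (hinf : X ++ [x] <:+: wpow V j) :
    ∃ (R : Word n) (k : ℕ), cyc R = cyc V ∧ R.head? = some x ∧ X <:+ wpow R k := by
  obtain ⟨A, B, hAB⟩ := hinf
  have heq : wpow V j = (A ++ X) ++ ([x] ++ B) := by
    rw [← hAB]; simp [List.append_assoc]
  obtain ⟨R, T, D, q, s, hcyc, hRne, hRdef, hTsuf, hDpre, hA, hZ⟩ :=
    split_wpow hV heq (by simp)
  refine ⟨R, q + 1, hcyc, ?_, ?_⟩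
  · have h1 : ([x] ++ B).head? = some x := by simp
    rw [hZ] at h1
    exact (head?_mix hDpre hRne s (by rw [← hZ]; simp)).symm.trans h1
  · have h2 : X <:+ T ++ wpow R q := ⟨A, hA⟩
    have h3 : T ++ wpow R q <:+ wpow R (q + 1) := by
      rw [wpow_succ]
      exact suffix_append_right _ hTsuf
    exact h2.trans h3

lemma exists_start_cut {V : Word n} (hV : V ≠ []) {j : ℕ} {T' : Word n} {x : Letter n}
    (hinf : x :: T' <:+: wpow V j) (hT' : T' ≠ []) :
    ∃ (R : Word n) (k : ℕ), cyc R = cyc V ∧ R.getLast? = some x ∧ T' <+: wpow R k := by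
  obtain ⟨A, B, hAB⟩ := hinf
  have heq : wpow V j = (A ++ [x]) ++ (T' ++ B) := by
    rw [← hAB]; simp [List.append_assoc]
  obtain ⟨R, T, D, q, s, hcyc, hRne, hRdef, hTsuf, hDpre, hA, hZ⟩ :=
    split_wpow hV heq (by
      intro hnil
      exact hT' (List.append_eq_nil_iff.mp hnil).1)
  refine ⟨R, s + 1, hcyc, ?_, ?_⟩
  · have h1 : (A ++ [x]).getLast? = some x := by simp
    rw [hA] at h1
    exact (getLast?_mix hTsuf hRne q (by rw [← hA]; simp)).symm.trans h1
  · have h2 : T' <+: wpow R s ++ D := ⟨B, by rw [← hZ]⟩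
    have h3 : wpow R s ++ D <+: wpow R (s + 1) := by
      rw [wpow_succ']
      exact prefix_append_left _ hDpre
    exact h2.trans h3

lemma exists_anchor {𝒪 𝒱 𝒲 : CWord n} (hV : CReduced 𝒱) (hW : CReduced 𝒲)
    {P Q : Word n} (hL : IsLinked 𝒪 P Q)
    (hP : ∃ j, SubwordPow P 𝒱 j) (hQ : ∃ k, SubwordPow Q 𝒲 k) :
    ∃ RV RW : Word n, cyc RV = 𝒱 ∧ cyc RW = 𝒲 ∧ Anch 𝒪 RV RW P Q := by
  obtain ⟨j, V, hVrep, hPinf⟩ := hP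
  obtain ⟨k, W, hWrep, hQinf⟩ := hQ
  have hVne : V ≠ [] := rep_ne_nil hV hVrep
  have hWne : W ≠ [] := rep_ne_nil hW hWrep
  obtain ⟨hPred, hQred, hPlen, hQlen, htypes⟩ := hL
  -- split P
  have hPne : P ≠ [] := by intro hnil; rw [hnil] at hPlen; simp at hPlen
  obtain ⟨P', p₂, hPsplit⟩ : ∃ P' p₂, P = P' ++ [p₂] := by
    rcases List.eq_nil_or_concat P with h | ⟨L, b, h⟩
    · exact absurd h hPne
    · exact ⟨L, b, by simpa [List.concat_eq_append] using h⟩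
  rw [hPsplit] at hPinf
  obtain ⟨RV, jv, hRVcyc, hRVhead, hRVsuf⟩ := exists_end_cut hVne hPinf
  by_cases h12 : LinkedType1 𝒪 P Q ∨ LinkedType2 𝒪 P Q
  · -- end cut for Q
    have hQne : Q ≠ [] := by intro hnil; rw [hnil] at hQlen; simp at hQlen
    obtain ⟨Q', q₂, hQsplit⟩ : ∃ Q' q₂, Q = Q' ++ [q₂] := by
      rcases List.eq_nil_or_concat Q with h | ⟨L, b, h⟩
      · exact absurd h hQne
      · exact ⟨L, b, by simpa [List.concat_eq_append] using h⟩
    rw [hQsplit] at hQinf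
    obtain ⟨RW, kw, hRWcyc, hRWhead, hRWsuf⟩ := exists_end_cut hWne hQinf
    exact ⟨RV, RW, hRVcyc.trans hVrep, hRWcyc.trans hWrep,
      ⟨P', p₂, jv, hPsplit, hRVhead, hRVsuf⟩,
      Or.inl ⟨h12, Q', q₂, kw, hQsplit, hRWhead, hRWsuf⟩⟩
  · have h3 : LinkedType3 𝒪 P Q := by
      rcases htypes with h | h | h
      · exact absurd (Or.inl h) h12
      · exact absurd (Or.inr h) h12
      · exact h
    obtain ⟨p₁, p₂', q₁, q₂, Y, hYne, hPform, hQform, _, _, _⟩ := id h3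
    rw [hQform] at hQinf
    have : q₁ :: (Word.bar Y ++ [q₂]) <:+: wpow W k := by simpa using hQinf
    obtain ⟨RW, kw, hRWcyc, hRWlast, hRWpre⟩ := exists_start_cut hWne this (by simp)
    refine ⟨RV, RW, hRVcyc.trans hVrep, hRWcyc.trans hWrep,
      ⟨P', p₂, jv, hPsplit, hRVhead, hRVsuf⟩,
      Or.inr ⟨h3, q₁, Word.bar Y ++ [q₂], kw, by simpa using hQform, hRWlast, hRWpre⟩⟩

end AnchorDef
section Unique
variable {n : ℕ}

lemma snoc_inj {X Y : Word n} {a b : Letter n} (h : X ++ [a] = Y ++ [b]) :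
    X = Y ∧ a = b := by
  have hlen : X.length = Y.length := by
    have := congrArg List.length h; simp at this; omega
  obtain ⟨h1, h2⟩ := List.append_inj h hlen
  exact ⟨h1, by simpa using h2⟩

lemma wpow_pos_of_suffix {R X : Word n} {j : ℕ} (h : X <:+ wpow R j) (hX : X ≠ []) :
    1 ≤ j := by
  cases j with
  | zero => exact absurd (List.suffix_nil.mp h) hX
  | succ j => omega

lemma wpow_pos_of_prefix {R X : Word n} {j : ℕ} (h : X <+: wpow R j) (hX : X ≠ []) :
    1 ≤ j := by
  cases j with
  | zero => exact absurd (List.prefix_nil.mp h) hX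
  | succ j => omega

lemma getLast?_eq_of_suffix_wpow {R X : Word n} {j : ℕ} (hR : R ≠ [])
    (h : X <:+ wpow R j) (hX : X ≠ []) : R.getLast? = X.getLast? :=
  (getLast?_wpow hR (wpow_pos_of_suffix h hX)).symm.trans (getLast?_of_suffix h hX)

lemma head?_eq_of_prefix_wpow {R X : Word n} {j : ℕ} (hR : R ≠ [])
    (h : X <+: wpow R j) (hX : X ≠ []) : R.head? = X.head? :=
  (head?_wpow hR (wpow_pos_of_prefix h hX)).symm.trans (head?_of_prefix h hX)

/-- Normalized description of anchored linked pairs. -/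
lemma anch_cases {𝒪 : CWord n} (h𝒪 : SurfaceSymbol 𝒪) {RV RW P Q : Word n}
    (hRV : CReduced (cyc RV)) (hRW : CReduced (cyc RW))
    (hA : Anch 𝒪 RV RW P Q) :
    (∃ p₁ p₂ q₁ q₂ : Letter n, P = [p₁, p₂] ∧ Q = [q₁, q₂] ∧
      RV.getLast? = some p₁ ∧ RV.head? = some p₂ ∧
      RW.getLast? = some q₁ ∧ RW.head? = some q₂ ∧
      p₁ ≠ q₁ ∧ Letter.bar p₁ ≠ q₂) ∨
    (∃ (p₁ p₂ q₁ q₂ : Letter n) (Y : Word n) (j k : ℕ), Y ≠ [] ∧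
      P = (p₁ :: Y) ++ [p₂] ∧ Q = (q₁ :: Y) ++ [q₂] ∧ p₁ ≠ q₁ ∧
      RV.head? = some p₂ ∧ RW.head? = some q₂ ∧
      p₁ :: Y <:+ wpow RV j ∧ q₁ :: Y <:+ wpow RW k ∧
      RV.getLast? = RW.getLast?) ∨
    (∃ (p₁ p₂ q₁ q₂ lV : Letter n) (Y : Word n) (j k : ℕ), Y ≠ [] ∧
      P = (p₁ :: Y) ++ [p₂] ∧ Q = (q₁ :: Word.bar Y) ++ [q₂] ∧
      p₁ ≠ Letter.bar q₂ ∧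
      RV.head? = some p₂ ∧ RW.getLast? = some q₁ ∧
      p₁ :: Y <:+ wpow RV j ∧ Word.bar Y ++ [q₂] <+: wpow RW k ∧
      RV.getLast? = some lV ∧ RW.head? = some (Letter.bar lV)) := by
  have hRVne : RV ≠ [] := rep_ne_nil hRV rfl
  have hRWne : RW ≠ [] := rep_ne_nil hRW rfl
  obtain ⟨⟨P₁, pv, jv, hPsp, hRVh, hPsuf⟩, hWside⟩ := hA
  rcases hWside with ⟨h12, Q₁, qw, kw, hQsp, hRWh, hQsuf⟩ | ⟨h3, q₁x, T, kw, hQsp, hRWl, hTpre⟩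
  · rcases h12 with hL1 | hL2
    · obtain ⟨p₁, p₂, q₁, q₂, hPf, hQf, ho⟩ := hL1
      obtain ⟨hP₁, hpv⟩ : P₁ = [p₁] ∧ pv = p₂ :=
        snoc_inj (by rw [← hPsp, hPf]; rfl)
      obtain ⟨hQ₁, hqv⟩ : Q₁ = [q₁] ∧ qw = q₂ :=
        snoc_inj (by rw [← hQsp, hQf]; rfl)
      rw [hP₁] at hPsuf
      rw [hQ₁] at hQsuf
      rw [hpv] at hRVh
      rw [hqv] at hRWh
      have hgl : RV.getLast? = some p₁ := by
        have := getLast?_eq_of_suffix_wpow hRVne hPsuf (by simp)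
        simpa using this
      have hgl' : RW.getLast? = some q₁ := by
        have := getLast?_eq_of_suffix_wpow hRWne hQsuf (by simp)
        simpa using this
      have hnd := nodup_of_o_ne_zero h𝒪 ho
      have hne1 : p₁ ≠ q₁ := by
        intro e; rw [e] at hnd; simp at hnd
      have hne2 : Letter.bar p₁ ≠ q₂ := by
        intro e; rw [← e] at hnd; simp at hnd
      exact Or.inl ⟨p₁, p₂, q₁, q₂, hPf, hQf, hgl, hRVh, hgl', hRWh, hne1, hne2⟩
    · obtain ⟨p₁, p₂, q₁, q₂, Y, hYne, hPf, hQf, hpq1, hpq2, _⟩ := hL2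
      obtain ⟨hP₁, hpv⟩ : P₁ = p₁ :: Y ∧ pv = p₂ :=
        snoc_inj (by rw [← hPsp, hPf])
      obtain ⟨hQ₁, hqv⟩ : Q₁ = q₁ :: Y ∧ qw = q₂ :=
        snoc_inj (by rw [← hQsp, hQf])
      rw [hP₁] at hPsuf
      rw [hQ₁] at hQsuf
      rw [hpv] at hRVh
      rw [hqv] at hRWh
      have hYsufV : Y <:+ wpow RV jv := (List.suffix_cons p₁ Y).trans hPsuf
      have hYsufW : Y <:+ wpow RW kw := (List.suffix_cons q₁ Y).trans hQsuf
      have hglg : RV.getLast? = RW.getLast? :=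
        (getLast?_eq_of_suffix_wpow hRVne hYsufV hYne).trans
          (getLast?_eq_of_suffix_wpow hRWne hYsufW hYne).symm
      exact Or.inr (Or.inl ⟨p₁, p₂, q₁, q₂, Y, jv, kw, hYne, hPf, hQf, hpq1,
        hRVh, hRWh, hPsuf, hQsuf, hglg⟩)
  · obtain ⟨p₁, p₂, q₁, q₂, Y, hYne, hPf, hQf, hpq2, hpq1, _⟩ := id h3
    obtain ⟨hP₁, hpv⟩ : P₁ = p₁ :: Y ∧ pv = p₂ :=
      snoc_inj (by rw [← hPsp, hPf])
    rw [hP₁] at hPsuf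
    rw [hpv] at hRVh
    have hbarYne : Word.bar Y ≠ [] := by
      simp [Word.bar]; exact hYne
    have hcons : q₁x :: T = q₁ :: (Word.bar Y ++ [q₂]) := by
      rw [← hQsp, hQf]; rfl
    obtain ⟨hq₁, hT⟩ : q₁x = q₁ ∧ T = Word.bar Y ++ [q₂] := by
      have h1 := List.head_eq_of_cons_eq hcons
      have h2 := List.tail_eq_of_cons_eq hcons
      exact ⟨h1, h2⟩
    rw [hq₁] at hRWl
    rw [hT] at hTpre
    -- getLast of Y
    obtain ⟨Y₀, lV, hY⟩ : ∃ Y₀ lV, Y = Y₀ ++ [lV] := by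
      rcases List.eq_nil_or_concat Y with h | ⟨L, b, h⟩
      · exact absurd h hYne
      · exact ⟨L, b, by simpa [List.concat_eq_append] using h⟩
    have hYsufV : Y <:+ wpow RV jv := (List.suffix_cons p₁ Y).trans hPsuf
    have hglV : RV.getLast? = some lV := by
      rw [getLast?_eq_of_suffix_wpow hRVne hYsufV hYne, hY]
      simp
    have hheadW : RW.head? = some (Letter.bar lV) := by
      rw [head?_eq_of_prefix_wpow hRWne hTpre (by simp [hbarYne])]
      rw [hY, Word.bar_append]
      simp [Word.bar]
    exact Or.inr (Or.inr ⟨p₁, p₂, q₁, q₂, lV, Y, jv, kw, hYne, hPf, hQf, hpq2,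
      hRVh, hRWl, hPsuf, hTpre, hglV, hheadW⟩)

lemma type2_clash {RV RW : Word n} {p₁ q₁ p₁' q₁' : Letter n} {Y Y' : Word n}
    {j k j' k' : ℕ}
    (hP : p₁ :: Y <:+ wpow RV j) (hQ : q₁ :: Y <:+ wpow RW k)
    (hP' : p₁' :: Y' <:+ wpow RV j') (hQ' : q₁' :: Y' <:+ wpow RW k')
    (hlt : Y.length < Y'.length) (hne : p₁ ≠ q₁) : False := by
  have h1 : p₁ :: Y <:+ Y' :=
    suffix_cons_drop (suffix_wpow_trans hP hP' (by simp; omega)) (by simp; omega)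
  have h2 : q₁ :: Y <:+ Y' :=
    suffix_cons_drop (suffix_wpow_trans hQ hQ' (by simp; omega)) (by simp; omega)
  have := suffix_eq_of_length h1 h2 rfl
  exact hne (List.head_eq_of_cons_eq this)

lemma type3_clash {RV RW : Word n} {p₁ q₂ p₁' q₂' : Letter n} {Y Y' : Word n}
    {j k j' k' : ℕ}
    (hP : p₁ :: Y <:+ wpow RV j) (hQ : Word.bar Y ++ [q₂] <+: wpow RW k)
    (hP' : p₁' :: Y' <:+ wpow RV j') (hQ' : Word.bar Y' ++ [q₂'] <+: wpow RW k')
    (hlt : Y.length < Y'.length) (hne : p₁ ≠ Letter.bar q₂) : False := by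
  have h1 : p₁ :: Y <:+ Y' :=
    suffix_cons_drop (suffix_wpow_trans hP hP' (by simp; omega)) (by simp; omega)
  have h2 : Word.bar (p₁ :: Y) <+: Word.bar Y' := Word.bar_prefix_of_suffix h1
  rw [Word.bar_cons] at h2
  have h3 : Word.bar Y ++ [q₂] <+: Word.bar Y' := by
    have hpre0 : Word.bar Y' <+: Word.bar Y' ++ [q₂'] := ⟨[q₂'], rfl⟩
    have hYpre : Word.bar Y' <+: wpow RW k' := List.IsPrefix.trans hpre0 hQ'
    exact prefix_wpow_trans hQ hYpre (by simp [Word.bar]; omega)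
  have h4 : Word.bar Y ++ [Letter.bar p₁] = Word.bar Y ++ [q₂] :=
    List.IsPrefix.eq_of_length (List.prefix_of_prefix_length_le h2 h3 (by simp)) (by simp)
  have h5 : Letter.bar p₁ = q₂ := (snoc_inj h4).2
  exact hne (by rw [← h5, Letter.bar_bar])

end Unique
section Main
variable {n : ℕ}

lemma anch_unique {𝒪 : CWord n} (h𝒪 : SurfaceSymbol 𝒪) {RV RW : Word n}
    (hRV : CReduced (cyc RV)) (hRW : CReduced (cyc RW))
    {P Q P' Q' : Word n}
    (hA : Anch 𝒪 RV RW P Q) (hA' : Anch 𝒪 RV RW P' Q') :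
    P = P' ∧ Q = Q' := by
  have hc := anch_cases h𝒪 hRV hRW hA
  have hc' := anch_cases h𝒪 hRV hRW hA'
  -- mixed clashes as reusable facts
  rcases hc with ⟨p₁, p₂, q₁, q₂, hPf, hQf, hgl, hhd, hgl', hhd', hne1, hne2⟩ |
    ⟨p₁, p₂, q₁, q₂, Y, j, k, hYne, hPf, hQf, hpq, hhd, hhd', hPs, hQs, hgleq⟩ |
    ⟨p₁, p₂, q₁, q₂, lV, Y, j, k, hYne, hPf, hQf, hpq, hhd, hgl', hPs, hQp, hglV, hhW⟩
  · rcases hc' with ⟨p₁', p₂', q₁', q₂', hPf', hQf', hgl2, hhd2, hgl2', hhd2', _, _⟩ |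
      ⟨p₁', p₂', q₁', q₂', Y', j', k', hYne', hPf', hQf', hpq', hhd2, hhd2', hPs', hQs', hgleq'⟩ |
      ⟨p₁', p₂', q₁', q₂', lV', Y', j', k', hYne', hPf', hQf', hpq', hhd2, hgl2', hPs', hQp', hglV', hhW'⟩
    · -- (1,1)
      have e1 : p₁ = p₁' := by rw [hgl] at hgl2; exact Option.some_inj.mp hgl2
      have e2 : p₂ = p₂' := by rw [hhd] at hhd2; exact Option.some_inj.mp hhd2
      have e3 : q₁ = q₁' := by rw [hgl'] at hgl2'; exact Option.some_inj.mp hgl2'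
      have e4 : q₂ = q₂' := by rw [hhd'] at hhd2'; exact Option.some_inj.mp hhd2'
      rw [hPf, hPf', hQf, hQf', e1, e2, e3, e4]; exact ⟨rfl, rfl⟩
    · -- (1,2)
      exfalso
      rw [hgl, hgl'] at hgleq'
      exact hne1 (Option.some_inj.mp hgleq')
    · -- (1,3)
      exfalso
      rw [hgl] at hglV'
      have : lV' = p₁ := (Option.some_inj.mp hglV').symm
      rw [this, hhd'] at hhW'
      exact hne2 (Option.some_inj.mp hhW').symm
  · rcases hc' with ⟨p₁', p₂', q₁', q₂', hPf', hQf', hgl2, hhd2, hgl2', hhd2', hne1', hne2'⟩ |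
      ⟨p₁', p₂', q₁', q₂', Y', j', k', hYne', hPf', hQf', hpq', hhd2, hhd2', hPs', hQs', hgleq'⟩ |
      ⟨p₁', p₂', q₁', q₂', lV', Y', j', k', hYne', hPf', hQf', hpq', hhd2, hgl2', hPs', hQp', hglV', hhW'⟩
    · -- (2,1)
      exfalso
      rw [hgl2, hgl2'] at hgleq
      exact hne1' (Option.some_inj.mp hgleq)
    · -- (2,2)
      rcases Nat.lt_trichotomy Y.length Y'.length with hlt | heq | hgt
      · exact absurd (type2_clash hPs hQs hPs' hQs' hlt hpq) not_false
      · have eP : p₁ :: Y = p₁' :: Y' := suffix_wpow_eq hPs hPs' (by simp [heq])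
        have eQ : q₁ :: Y = q₁' :: Y' := suffix_wpow_eq hQs hQs' (by simp [heq])
        have e2 : p₂ = p₂' := by rw [hhd] at hhd2; exact Option.some_inj.mp hhd2
        have e4 : q₂ = q₂' := by rw [hhd'] at hhd2'; exact Option.some_inj.mp hhd2'
        rw [hPf, hPf', hQf, hQf', eP, eQ, e2, e4]; exact ⟨rfl, rfl⟩
      · exact absurd (type2_clash hPs' hQs' hPs hQs hgt hpq') not_false
    · -- (2,3)
      exfalso
      rw [hglV'] at hgleq
      have hWl : RW.getLast? = some lV' := hgleq.symm
      exact head?_ne_bar_getLast? hRW hhW' hWl rfl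
  · rcases hc' with ⟨p₁', p₂', q₁', q₂', hPf', hQf', hgl2, hhd2, hgl2', hhd2', hne1', hne2'⟩ |
      ⟨p₁', p₂', q₁', q₂', Y', j', k', hYne', hPf', hQf', hpq', hhd2, hhd2', hPs', hQs', hgleq'⟩ |
      ⟨p₁', p₂', q₁', q₂', lV', Y', j', k', hYne', hPf', hQf', hpq', hhd2, hgl2', hPs', hQp', hglV', hhW'⟩
    · -- (3,1)
      exfalso
      rw [hgl2] at hglV
      have : lV = p₁' := (Option.some_inj.mp hglV).symm
      rw [this, hhd2'] at hhW
      exact hne2' (Option.some_inj.mp hhW).symm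
    · -- (3,2)
      exfalso
      rw [hglV] at hgleq'
      have hWl : RW.getLast? = some lV := hgleq'.symm
      exact head?_ne_bar_getLast? hRW hhW hWl rfl
    · -- (3,3)
      rcases Nat.lt_trichotomy Y.length Y'.length with hlt | heq | hgt
      · exact absurd (type3_clash hPs hQp hPs' hQp' hlt hpq) not_false
      · have eP : p₁ :: Y = p₁' :: Y' := suffix_wpow_eq hPs hPs' (by simp [heq])
        have eT : Word.bar Y ++ [q₂] = Word.bar Y' ++ [q₂'] :=
          prefix_wpow_eq hQp hQp' (by simp [Word.bar, heq])
        have e2 : p₂ = p₂' := by rw [hhd] at hhd2; exact Option.some_inj.mp hhd2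
        have e3 : q₁ = q₁' := by rw [hgl'] at hgl2'; exact Option.some_inj.mp hgl2'
        have eY : Y = Y' := List.tail_eq_of_cons_eq eP
        have e4 : q₂ = q₂' := by
          rw [eY] at eT
          exact (snoc_inj eT).2
        rw [hPf, hPf', hQf, hQf', eP, e2, e3, e4, eY]; exact ⟨rfl, rfl⟩
      · exact absurd (type3_clash hPs' hQp' hPs hQp hgt hpq') not_false

lemma anch_ne {𝒪 : CWord n} (h𝒪 : SurfaceSymbol 𝒪) {RW : Word n}
    (hRW : CReduced (cyc RW)) {P Q : Word n}
    (hA : Anch 𝒪 RW RW P Q) : False := by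
  rcases anch_cases h𝒪 hRW hRW hA with
    ⟨p₁, p₂, q₁, q₂, hPf, hQf, hgl, hhd, hgl', hhd', hne1, hne2⟩ |
    ⟨p₁, p₂, q₁, q₂, Y, j, k, hYne, hPf, hQf, hpq, hhd, hhd', hPs, hQs, hgleq⟩ |
    ⟨p₁, p₂, q₁, q₂, lV, Y, j, k, hYne, hPf, hQf, hpq, hhd, hgl', hPs, hQp, hglV, hhW⟩
  · rw [hgl] at hgl'
    exact hne1 (Option.some_inj.mp hgl')
  · have := suffix_wpow_eq hPs hQs rfl
    exact hpq (List.head_eq_of_cons_eq this)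
  · exact head?_ne_bar_getLast? hRW hhW hglV rfl

end Main
section Count
variable {n : ℕ}

lemma subwordPow_of_subword {P : Word n} {𝒲 : CWord n} (h : Subword P 𝒲) :
    SubwordPow P 𝒲 1 := by
  obtain ⟨W, hW, hinf⟩ := h
  exact ⟨W, hW, by rwa [wpow_one]⟩

open Classical in
lemma count_core {𝒪 𝒱 𝒲 : CWord n} (h𝒪 : SurfaceSymbol 𝒪)
    (hV : CReduced 𝒱) (hW : CReduced 𝒲) (s : Set (Word n × Word n))
    (hmem : ∀ p ∈ s, IsLinked 𝒪 p.1 p.2 ∧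
      (∃ j, SubwordPow p.1 𝒱 j) ∧ (∃ k, SubwordPow p.2 𝒲 k)) :
    (s.Finite ∧ s.ncard ≤ clen 𝒱 * clen 𝒲) ∧
    (𝒱 = 𝒲 → s.ncard ≤ clen 𝒲 * (clen 𝒲 - 1)) := by
  classical
  obtain ⟨V₀, hV₀⟩ := Quotient.exists_rep 𝒱
  obtain ⟨W₀, hW₀⟩ := Quotient.exists_rep 𝒲
  have hV₀c : cyc V₀ = 𝒱 := hV₀
  have hW₀c : cyc W₀ = 𝒲 := hW₀
  have hV₀ne : V₀ ≠ [] := rep_ne_nil hV hV₀c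
  have hW₀ne : W₀ ≠ [] := rep_ne_nil hW hW₀c
  have haV : V₀.length = clen 𝒱 := by rw [← hV₀c]; exact (Cycle.length_coe V₀).symm
  have haW : W₀.length = clen 𝒲 := by rw [← hW₀c]; exact (Cycle.length_coe W₀).symm
  set F : Word n × Word n → Word n × Word n := fun p =>
    if h : ∃ RVW : Word n × Word n,
        cyc RVW.1 = 𝒱 ∧ cyc RVW.2 = 𝒲 ∧ Anch 𝒪 RVW.1 RVW.2 p.1 p.2
    then h.choose else ([], []) with hFdef
  have hFspec : ∀ p ∈ s, cyc (F p).1 = 𝒱 ∧ cyc (F p).2 = 𝒲 ∧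
      Anch 𝒪 (F p).1 (F p).2 p.1 p.2 := by
    intro p hp
    obtain ⟨hL, hPj, hQk⟩ := hmem p hp
    obtain ⟨RV, RW, h1, h2, h3⟩ := exists_anchor hV hW hL hPj hQk
    have hex : ∃ RVW : Word n × Word n,
        cyc RVW.1 = 𝒱 ∧ cyc RVW.2 = 𝒲 ∧ Anch 𝒪 RVW.1 RVW.2 p.1 p.2 :=
      ⟨(RV, RW), h1, h2, h3⟩
    rw [hFdef]
    simp only [dif_pos hex]
    exact hex.choose_spec
  have hinj : Set.InjOn F s := by
    intro p hp p' hp' he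
    obtain ⟨hc1, hc2, hanch⟩ := hFspec p hp
    obtain ⟨hc1', hc2', hanch'⟩ := hFspec p' hp'
    rw [he] at hanch hc1 hc2
    have hRVred : CReduced (cyc (F p').1) := by rw [hc1']; exact hV
    have hRWred : CReduced (cyc (F p').2) := by rw [hc2']; exact hW
    obtain ⟨e1, e2⟩ := anch_unique h𝒪 hRVred hRWred hanch hanch'
    exact Prod.ext e1 e2
  -- target finsets
  set rotV : Finset (Word n) := (Finset.range V₀.length).image (fun m => V₀.rotate m)
    with hrotV
  set rotW : Finset (Word n) := (Finset.range W₀.length).image (fun m => W₀.rotate m)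
    with hrotW
  have hmemrot : ∀ (U₀ R : Word n), U₀ ≠ [] → cyc R = cyc U₀ →
      R ∈ (Finset.range U₀.length).image (fun m => U₀.rotate m) := by
    intro U₀ R hne hcyc
    have hrot : U₀ ~r R := (Cycle.coe_eq_coe.mp hcyc).symm
    obtain ⟨m, hm⟩ := hrot
    refine Finset.mem_image.mpr ⟨m % U₀.length, Finset.mem_range.mpr ?_, ?_⟩
    · exact Nat.mod_lt _ (List.length_pos_iff.mpr hne)
    · rw [List.rotate_mod]; exact hm
  have hcardV : rotV.card ≤ clen 𝒱 := by
    rw [← haV, hrotV]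
    exact (Finset.card_image_le).trans (by simp)
  have hcardW : rotW.card ≤ clen 𝒲 := by
    rw [← haW, hrotW]
    exact (Finset.card_image_le).trans (by simp)
  have himg : F '' s ⊆ ↑(rotV ×ˢ rotW) := by
    rintro _ ⟨p, hp, rfl⟩
    obtain ⟨hc1, hc2, _⟩ := hFspec p hp
    rw [Finset.coe_product]
    exact ⟨hmemrot V₀ _ hV₀ne (hc1.trans hV₀c.symm),
           hmemrot W₀ _ hW₀ne (hc2.trans hW₀c.symm)⟩
  have hsfin : s.Finite := by
    apply Set.Finite.of_finite_image ?_ hinj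
    exact Set.Finite.subset (rotV ×ˢ rotW).finite_toSet himg
  have hcard1 : s.ncard ≤ clen 𝒱 * clen 𝒲 := by
    calc s.ncard = (F '' s).ncard := (Set.ncard_image_of_injOn hinj).symm
      _ ≤ (↑(rotV ×ˢ rotW) : Set (Word n × Word n)).ncard :=
          Set.ncard_le_ncard himg (rotV ×ˢ rotW).finite_toSet
      _ = (rotV ×ˢ rotW).card := Set.ncard_coe_finset _
      _ = rotV.card * rotW.card := Finset.card_product _ _
      _ ≤ clen 𝒱 * clen 𝒲 := Nat.mul_le_mul hcardV hcardW
  refine ⟨⟨hsfin, hcard1⟩, ?_⟩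
  intro hVW
  have hne : ∀ p ∈ s, (F p).1 ≠ (F p).2 := by
    intro p hp heq
    obtain ⟨hc1, hc2, hanch⟩ := hFspec p hp
    rw [heq] at hanch
    have hRWred : CReduced (cyc (F p).2) := by rw [hc2]; exact hW
    exact anch_ne h𝒪 hRWred hanch
  have himg2 : F '' s ⊆ ↑(rotW.offDiag) := by
    rintro _ ⟨p, hp, rfl⟩
    obtain ⟨hc1, hc2, _⟩ := hFspec p hp
    rw [Finset.coe_offDiag]
    exact ⟨hmemrot W₀ _ hW₀ne ((hc1.trans hVW).trans hW₀c.symm),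
           hmemrot W₀ _ hW₀ne (hc2.trans hW₀c.symm), hne p hp⟩
  calc s.ncard = (F '' s).ncard := (Set.ncard_image_of_injOn hinj).symm
    _ ≤ (↑rotW.offDiag : Set (Word n × Word n)).ncard :=
        Set.ncard_le_ncard himg2 rotW.offDiag.finite_toSet
    _ = rotW.offDiag.card := Set.ncard_coe_finset _
    _ = rotW.card * rotW.card - rotW.card := Finset.offDiag_card _
    _ = rotW.card * (rotW.card - 1) := by rw [Nat.mul_sub, Nat.mul_one]
    _ ≤ clen 𝒲 * (clen 𝒲 - 1) :=
        Nat.mul_le_mul hcardW (Nat.sub_le_sub_right hcardW 1)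

end Count
/-- `𝕃ℙ₂(𝒱,𝒲)` has at most `l(𝒱)·l(𝒲)` elements and `𝕃ℙ₁(𝒲)`
has at most `l(𝒲)·(l(𝒲)-1)` elements. -/
theorem lp_finite_card_bounds (n : ℕ) (𝒪 : CWord n) (h𝒪 : SurfaceSymbol 𝒪)
    (𝒱 𝒲 : CWord n) (hV : CReduced 𝒱) (hW : CReduced 𝒲) :
    ({PQ : Word n × Word n | LP2 𝒪 𝒱 𝒲 PQ.1 PQ.2}.Finite ∧
      {PQ : Word n × Word n | LP2 𝒪 𝒱 𝒲 PQ.1 PQ.2}.ncard ≤ clen 𝒱 * clen 𝒲) ∧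
    ({PQ : Word n × Word n | LP1 𝒪 𝒲 PQ.1 PQ.2}.Finite ∧
      {PQ : Word n × Word n | LP1 𝒪 𝒲 PQ.1 PQ.2}.ncard ≤
        clen 𝒲 * (clen 𝒲 - 1)) := by
  constructor
  · have h := count_core h𝒪 hV hW {PQ : Word n × Word n | LP2 𝒪 𝒱 𝒲 PQ.1 PQ.2} ?_
    · exact h.1
    · intro p hp
      obtain ⟨hL, j, k, hj, hk, hsP, hsQ, _⟩ := hp
      exact ⟨hL, ⟨j, hsP⟩, ⟨k, hsQ⟩⟩
  · have h := count_core h𝒪 hW hW {PQ : Word n × Word n | LP1 𝒪 𝒲 PQ.1 PQ.2} ?_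
    · exact ⟨h.1.1, h.2 rfl⟩
    · intro p hp
      exact ⟨hp.1, ⟨1, subwordPow_of_subword hp.2.1⟩, ⟨1, subwordPow_of_subword hp.2.2⟩⟩
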